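/- Let Z be an integrable real random variable and α ∈ (0,1). If F_Z(F_Z^{-1}(α)) = α, then CVaR_α(Z) = E[ Z | Z ≤ F_Z^{-1}(α) ]. -/

import Mathlib

open MeasureTheory

/-- Conditional value at risk at level `α` of the random variable `Z` under measure `μ`:
`CVaR_α(Z) = sup_β (β + α⁻¹ E[min (Z − β) 0])`. -/
noncomputable def cvar {Ω : Type*} [MeasurableSpace Ω] (μ : Measure Ω) (Z : Ω → ℝ) (α : ℝ) : ℝ :=
  ⨆ β : ℝ, β + α⁻¹ * ∫ ω, min (Z ω - β) 0 ∂μ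

/-- The `p`-quantile of `Z` under `μ`: `F_Z⁻¹(p) = inf {β : P(Z ≤ β) ≥ p}`. -/
noncomputable def quantile {Ω : Type*} [MeasurableSpace Ω] (μ : Measure Ω) (Z : Ω → ℝ)
    (p : ℝ) : ℝ :=
  sInf {β : ℝ | p ≤ (μ {ω | Z ω ≤ β}).toReal}

/-- For integrable `Z` and `α ∈ (0,1)`, if `F_Z(F_Z⁻¹(α)) = α` then
`CVaR_α(Z) = E[Z ∣ Z ≤ F_Z⁻¹(α)]`. -/
theorem cvar_eq_tail_expectation {Ω : Type*} [MeasurableSpace Ω]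
    (μ : Measure Ω) [IsProbabilityMeasure μ]
    (Z : Ω → ℝ) (hZm : Measurable Z) (hZi : Integrable Z μ)
    (α : ℝ) (hα : α ∈ Set.Ioo (0 : ℝ) 1)
    (hq : (μ {ω | Z ω ≤ quantile μ Z α}).toReal = α) :
    cvar μ Z α = (∫ ω in {ω | Z ω ≤ quantile μ Z α}, Z ω ∂μ) /
      (μ {ω | Z ω ≤ quantile μ Z α}).toReal := by
  obtain ⟨hα0, hα1⟩ := hα
  set q := quantile μ Z α with hqdef
  set S : Set Ω := {ω | Z ω ≤ q} with hS
  have hSm : MeasurableSet S := hZm measurableSet_Iic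
  -- integrability of min (Z - β) 0
  have hint : ∀ β : ℝ, Integrable (fun ω => min (Z ω - β) 0) μ := by
    intro β
    have := (hZi.sub (integrable_const β)).inf (integrable_const (0 : ℝ))
    simpa [Pi.inf_def, Pi.sub_def] using this
  -- f q computation
  have hminq : (fun ω => min (Z ω - q) 0) = S.indicator (fun ω => Z ω - q) := by
    funext ω
    by_cases h : Z ω ≤ q
    · simp [Set.indicator_of_mem, h, hS, min_eq_left, sub_nonpos.mpr h]
    · have : (0:ℝ) ≤ Z ω - q := le_of_lt (sub_pos.mpr (lt_of_not_ge h))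
      simp [Set.indicator_of_notMem, h, hS, min_eq_right this]
  have hIq : ∫ ω, min (Z ω - q) 0 ∂μ = (∫ ω in S, Z ω ∂μ) - q * α := by
    rw [hminq, integral_indicator hSm]
    rw [integral_sub (hZi.restrict) (integrable_const q), integral_const]
    simp [Measure.restrict_apply_univ, measureReal_def, hq, smul_eq_mul, mul_comm]
  -- key inequality : f β ≤ f q
  have hkey : ∀ β : ℝ, β + α⁻¹ * ∫ ω, min (Z ω - β) 0 ∂μ
      ≤ q + α⁻¹ * ∫ ω, min (Z ω - q) 0 ∂μ := by
    intro β
    have hpt : ∀ ω, min (Z ω - β) 0 ≤ min (Z ω - q) 0 + (q - β) * S.indicator 1 ω := by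
      intro ω
      by_cases h : Z ω ≤ q
      · have : S.indicator (1 : Ω → ℝ) ω = 1 := Set.indicator_of_mem h 1
        rw [this, mul_one]
        rcases le_or_gt (Z ω) β with h2 | h2
        · rw [min_eq_left (sub_nonpos.mpr h2), min_eq_left (sub_nonpos.mpr h)]; ring_nf; rfl
        · calc min (Z ω - β) 0 ≤ 0 := min_le_right _ _
            _ ≤ (Z ω - q) + (q - β) := by linarith
            _ ≤ min (Z ω - q) 0 + (q - β) := by
                rw [min_eq_left (sub_nonpos.mpr h)]
      · have hni : ω ∉ S := h
        have : S.indicator (1 : Ω → ℝ) ω = 0 := Set.indicator_of_notMem hni 1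
        rw [this, mul_zero, add_zero]
        have hq0 : min (Z ω - q) 0 = 0 :=
          min_eq_right (le_of_lt (sub_pos.mpr (lt_of_not_ge h)))
        rw [hq0]; exact min_le_right _ _
    have hintR : Integrable (fun ω => min (Z ω - q) 0 + (q - β) * S.indicator 1 ω) μ := by
      refine (hint q).add ?_
      exact (((integrable_const (1:ℝ)).indicator hSm).const_mul (q - β))
    have hmono : ∫ ω, min (Z ω - β) 0 ∂μ
        ≤ ∫ ω, (min (Z ω - q) 0 + (q - β) * S.indicator 1 ω) ∂μ :=
      integral_mono (hint β) hintR hpt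
    have hInd : ∫ ω, (q - β) * S.indicator (1 : Ω → ℝ) ω ∂μ = (q - β) * α := by
      rw [integral_const_mul, integral_indicator_one hSm, measureReal_def, hq]
    have hc : Integrable (fun ω => (q - β) * S.indicator (1 : Ω → ℝ) ω) μ :=
      (((integrable_const (1:ℝ)).indicator hSm).const_mul (q - β))
    have hRHS : ∫ ω, (min (Z ω - q) 0 + (q - β) * S.indicator 1 ω) ∂μ
        = (∫ ω, min (Z ω - q) 0 ∂μ) + (q - β) * α := by
      rw [integral_add (hint q) hc, hInd]
    have h1 : α⁻¹ * ∫ ω, min (Z ω - β) 0 ∂μ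
        ≤ α⁻¹ * ((∫ ω, min (Z ω - q) 0 ∂μ) + (q - β) * α) := by
      refine mul_le_mul_of_nonneg_left ?_ (le_of_lt (inv_pos.mpr hα0))
      rw [← hRHS]; exact hmono
    have hαne : α ≠ 0 := ne_of_gt hα0
    calc β + α⁻¹ * ∫ ω, min (Z ω - β) 0 ∂μ
        ≤ β + α⁻¹ * ((∫ ω, min (Z ω - q) 0 ∂μ) + (q - β) * α) := by linarith
      _ = q + α⁻¹ * ∫ ω, min (Z ω - q) 0 ∂μ := by field_simp; ring
  -- conclude
  have hsup : cvar μ Z α = q + α⁻¹ * ∫ ω, min (Z ω - q) 0 ∂μ := by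
    refine le_antisymm (ciSup_le hkey) ?_
    exact le_ciSup ⟨q + α⁻¹ * ∫ ω, min (Z ω - q) 0 ∂μ, fun x ⟨β, hβ⟩ => hβ ▸ hkey β⟩ q
  rw [hsup, hIq, hq]
  field_simp
  ring
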